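/- The TRDM revenue is at least the revenue of the second-price auction run without referrals: under truthful bidding, b*_{V_{-r_s^*}} is at least the second-highest valuation among the children of s in G (taken as 0 if s has fewer than two children). Equivalently, for every child c of s other than r_s^*, c belongs to V_{-r_s^*}, so max_{j∈V_{-r_s^*}} v_j ≥ max over children c ≠ r_s^* of v_c, which is at least the second-highest valuation among s's children. -/

import Mathlib

open Classical

/-- A finite directed tree rooted at the seller `s`: every vertex reaches `s`
by iterating the parent map, and the root is its own parent. The agents are
the non-root vertices. -/
structure DiffusionTree (α : Type*) where
  s : α
  parent : α → α
  parent_s : parent s = s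
  reaches_s : ∀ x : α, ∃ n : ℕ, parent^[n] x = s

namespace DiffusionTree

variable {α : Type*} [Fintype α]

/-- The set of agents: all vertices except the seller. -/
noncomputable def agents (T : DiffusionTree α) : Finset α :=
  Finset.univ.filter (fun x => x ≠ T.s)

/-- `T.desc i j` : `j` is a strict descendant of `i`. -/
def desc (T : DiffusionTree α) (i j : α) : Prop :=
  ∃ n : ℕ, 0 < n ∧ T.parent^[n] j = i

/-- `V_{-i}` relative to the active agent set `A`: remove `i` and its descendants. -/
noncomputable def Vminus (T : DiffusionTree α) (A : Finset α) (i : α) : Finset α :=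
  A.filter (fun j => j ≠ i ∧ ¬ T.desc i j)

/-- `b*_S`: the highest bid in `S`, with `b*_∅ = 0`. -/
noncomputable def bstar (b : α → ℝ) (S : Finset α) : ℝ :=
  WithBot.unbotD 0 ((S.image b).max)

/-- Distance from a vertex to the root. -/
noncomputable def depth (T : DiffusionTree α) (x : α) : ℕ :=
  Nat.find (T.reaches_s x)

/-- The vertex `a_j` on the path `s = a_0, a_1, …, a_k = w` from `s` to `w`. -/
noncomputable def pathVx (T : DiffusionTree α) (w : α) (j : ℕ) : α :=
  T.parent^[T.depth w - j] w

/-- TRDM payments, on the active agent set `A`, for bids `b` and winner `w`: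
the winner pays `b*_{V_{-w}}`; an intermediate path agent `a_j` pays
`b*_{V_{-a_j}} − b*_{V_{-a_{j+1}}}`; everyone else pays `0`. -/
noncomputable def payment (T : DiffusionTree α) (A : Finset α) (b : α → ℝ)
    (w : α) (x : α) : ℝ :=
  if x = w then bstar b (T.Vminus A w)
  else if ∃ j : ℕ, 1 ≤ j ∧ j < T.depth w ∧ T.pathVx w j = x then
    bstar b (T.Vminus A x) - bstar b (T.Vminus A (T.pathVx w (T.depth x + 1)))
  else 0

/-- TRDM utility of an agent `i` with true valuation `v`. -/
noncomputable def util (T : DiffusionTree α) (A : Finset α) (b : α → ℝ)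
    (w : α) (v : ℝ) (i : α) : ℝ :=
  (if i = w then v else 0) - T.payment A b w i

end DiffusionTree


lemma bstar_le_aux {α : Type*} {b : α → ℝ} {S : Finset α} {t : ℝ}
    (h : ∀ x ∈ S, b x ≤ t) (ht : 0 ≤ t) : DiffusionTree.bstar b S ≤ t := by
  unfold DiffusionTree.bstar
  cases hm : (S.image b).max with
  | bot => simpa using ht
  | coe m =>
    obtain ⟨x, hx, hbx⟩ := Finset.mem_image.mp (Finset.mem_of_max hm)
    simpa [hbx] using h x hx

lemma le_bstar_aux {α : Type*} {b : α → ℝ} {S : Finset α} {x : α}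
    (hx : x ∈ S) : b x ≤ DiffusionTree.bstar b S := by
  unfold DiffusionTree.bstar
  have h := Finset.le_max (Finset.mem_image_of_mem b hx)
  cases hm : (S.image b).max with
  | bot => rw [hm] at h; exact absurd h (by simp)
  | coe m => rw [hm] at h; simpa using h

lemma bstar_nonneg_aux {α : Type*} {b : α → ℝ} {S : Finset α}
    (h : ∀ x ∈ S, 0 ≤ b x) : 0 ≤ DiffusionTree.bstar b S := by
  unfold DiffusionTree.bstar
  cases hm : (S.image b).max with
  | bot => simp
  | coe m =>
    obtain ⟨x, hx, hbx⟩ := Finset.mem_image.mp (Finset.mem_of_max hm)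
    simpa [hbx] using h x hx

open DiffusionTree in
/-- The TRDM revenue is at least the revenue of the second-price
auction run without referrals: under truthful bidding, `b*_{V_{-r_s^*}}` is at least
the second-highest valuation among the children of `s` (taken as `0` if `s` has
fewer than two children). Indeed, every child `c ≠ r_s^*` of `s` belongs to
`V_{-r_s^*}`, so `max_{j∈V_{-r_s^*}} v_j ≥ max_{c child of s, c ≠ r_s^*} v_c`, which
is at least the second-highest valuation among `s`'s children. (The second-highest
valuation among the children is the maximum valuation among the non-top children.) -/
theorem trdm_revenue_ge_second_price
    {α : Type*} [Fintype α] (T : DiffusionTree α)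
    (v : α → ℝ) (hpos : ∀ j ∈ T.agents, 0 ≤ v j)
    (hdist : ∀ j ∈ T.agents, ∀ j' ∈ T.agents, j ≠ j' → v j ≠ v j')
    (w : α) (hw : w ∈ T.agents)
    (hmax : ∀ j ∈ T.agents, j ≠ w → v j < v w) :
    -- every child of `s` other than `r_s^*` belongs to `V_{-r_s^*}`
    (∀ c ∈ T.agents.filter (fun c => T.parent c = T.s), c ≠ T.pathVx w 1 →
      c ∈ T.Vminus T.agents (T.pathVx w 1)) ∧
    -- so the revenue is at least the highest valuation among the other children
    bstar v ((T.agents.filter (fun c => T.parent c = T.s)).erase (T.pathVx w 1))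
      ≤ bstar v (T.Vminus T.agents (T.pathVx w 1)) ∧
    -- which is at least the second-highest valuation among `s`'s children
    bstar v ((T.agents.filter (fun c => T.parent c = T.s)).filter
        (fun c => ∃ c' ∈ T.agents.filter (fun c => T.parent c = T.s), v c < v c'))
      ≤ bstar v ((T.agents.filter (fun c => T.parent c = T.s)).erase (T.pathVx w 1)) ∧
    -- hence the TRDM revenue is at least the second-price revenue without referrals
    bstar v ((T.agents.filter (fun c => T.parent c = T.s)).filter
        (fun c => ∃ c' ∈ T.agents.filter (fun c => T.parent c = T.s), v c < v c'))
      ≤ bstar v (T.Vminus T.agents (T.pathVx w 1)) := by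

  classical
  have hw_ne : w ≠ T.s := by simpa [DiffusionTree.agents] using hw
  have hdw : 0 < T.depth w := by
    rcases Nat.eq_zero_or_pos (T.depth w) with h0 | h0
    · have hs := Nat.find_spec (T.reaches_s w)
      rw [show Nat.find (T.reaches_s w) = T.depth w from rfl, h0] at hs
      exact absurd (by simpa using hs) hw_ne
    · exact h0
  have hr_ne_s : T.pathVx w 1 ≠ T.s := by
    have := Nat.find_min (T.reaches_s w) (show T.depth w - 1 < T.depth w by omega)
    simpa [DiffusionTree.pathVx, DiffusionTree.depth] using this
  have h1 : ∀ c ∈ T.agents.filter (fun c => T.parent c = T.s), c ≠ T.pathVx w 1 →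
      c ∈ T.Vminus T.agents (T.pathVx w 1) := by
    intro c hc hcr
    rw [Finset.mem_filter] at hc
    refine Finset.mem_filter.mpr ⟨hc.1, hcr, ?_⟩
    rintro ⟨n, hn, hpn⟩
    obtain ⟨m, rfl⟩ := Nat.exists_eq_succ_of_ne_zero hn.ne'
    rw [Function.iterate_succ_apply, hc.2, Function.iterate_fixed T.parent_s] at hpn
    exact hr_ne_s hpn.symm
  have herase : ∀ c ∈ (T.agents.filter (fun c => T.parent c = T.s)).erase (T.pathVx w 1),
      c ∈ T.Vminus T.agents (T.pathVx w 1) := by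
    intro c hc
    rw [Finset.mem_erase] at hc
    exact h1 c hc.2 hc.1
  have hVsub : ∀ x ∈ T.Vminus T.agents (T.pathVx w 1), x ∈ T.agents := by
    intro x hx; exact (Finset.mem_filter.mp hx).1
  have hesub : ∀ x ∈ (T.agents.filter (fun c => T.parent c = T.s)).erase (T.pathVx w 1),
      x ∈ T.agents := by
    intro x hx
    exact (Finset.mem_filter.mp (Finset.mem_of_mem_erase hx)).1
  have h2 : bstar v ((T.agents.filter (fun c => T.parent c = T.s)).erase (T.pathVx w 1))
      ≤ bstar v (T.Vminus T.agents (T.pathVx w 1)) := by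
    refine bstar_le_aux (fun c hc => le_bstar_aux (herase c hc)) ?_
    exact bstar_nonneg_aux (fun x hx => hpos x (hVsub x hx))
  have h3 : bstar v ((T.agents.filter (fun c => T.parent c = T.s)).filter
        (fun c => ∃ c' ∈ T.agents.filter (fun c => T.parent c = T.s), v c < v c'))
      ≤ bstar v ((T.agents.filter (fun c => T.parent c = T.s)).erase (T.pathVx w 1)) := by
    refine bstar_le_aux ?_ (bstar_nonneg_aux (fun x hx => hpos x (hesub x hx)))
    intro c hc
    rw [Finset.mem_filter] at hc
    obtain ⟨c', hc', hlt⟩ := hc.2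
    by_cases hcr : c = T.pathVx w 1
    · have hc'r : c' ≠ T.pathVx w 1 := by
        intro h; rw [h, ← hcr] at hlt; exact lt_irrefl _ hlt
      exact hlt.le.trans (le_bstar_aux (Finset.mem_erase.mpr ⟨hc'r, hc'⟩))
    · exact le_bstar_aux (Finset.mem_erase.mpr ⟨hcr, hc.1⟩)
  exact ⟨h1, h2, h3, h3.trans h2⟩
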